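/- Let x be a mean-zero random vector in R^d satisfying the small-ball bound P(|⟨x,v⟩| ≥ 2δ‖v‖₂) ≥ 2Q for all v, and with E[x_j^4] ≤ ν for every coordinate j. Define the coordinatewise truncation x̃ by x̃_j = sign(x_j)(|x_j| ∧ τ) with τ = (N/log(ed))^{1/4}. If N ≥ (ν/Q) s₀ log(ed), then for every vector v ∈ R^d supported on at most s₀ coordinates, P(|⟨x̃,v⟩| ≥ δ‖v‖₂) ≥ Q. -/

import Mathlib

open MeasureTheory Real
open scoped Classical

noncomputable section

private lemma real_sign_mul_abs (r : ℝ) : Real.sign r * |r| = r := by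
  rcases lt_trichotomy r 0 with h | h | h
  · rw [Real.sign_of_neg h, abs_of_neg h]; ring
  · simp [h]
  · rw [Real.sign_of_pos h, abs_of_pos h]; ring

/-- The small-ball condition is preserved (with weaker constants) under coordinatewise
adaptive truncation at level `τ = (N / log(ed))^{1/4}`, for `s₀`-sparse directions. -/
theorem truncated_small_ball
    {Ω : Type*} [MeasurableSpace Ω] (μ : Measure Ω) [IsProbabilityMeasure μ]
    {d : ℕ} (x : Ω → Fin d → ℝ) (hxmeas : Measurable x)
    (δ Q ν : ℝ) (hδ : 0 < δ) (hQ : 0 < Q) (hν : 0 < ν)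
    (N : ℕ) (s₀ : ℕ) (hs₀ : 1 ≤ s₀) (hs₀d : s₀ ≤ d)
    (hcent : ∫ ω, x ω ∂μ = 0)
    (hsmallball : ∀ v : Fin d → ℝ,
      ENNReal.ofReal (2 * Q) ≤
        μ {ω | 2 * δ * Real.sqrt (∑ j, (v j) ^ 2) ≤ |∑ j, x ω j * v j|})
    (hint4 : ∀ j, Integrable (fun ω => (x ω j) ^ 4) μ)
    (hmom4 : ∀ j, ∫ ω, (x ω j) ^ 4 ∂μ ≤ ν)
    (hN : (ν / Q) * s₀ * Real.log (Real.exp 1 * d) ≤ N) :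
    ∀ v : Fin d → ℝ,
      (Finset.univ.filter fun j => v j ≠ 0).card ≤ s₀ →
      ENNReal.ofReal Q ≤
        μ {ω | δ * Real.sqrt (∑ j, (v j) ^ 2) ≤
          |∑ j, (Real.sign (x ω j) *
            min |x ω j| (((N : ℝ) / Real.log (Real.exp 1 * d)) ^ ((1 : ℝ) / 4))) * v j|} := by
  intro v hv
  -- notation
  set L : ℝ := Real.log (Real.exp 1 * d) with hLdef
  have hd : 1 ≤ d := le_trans hs₀ hs₀d
  have hd0 : (0 : ℝ) < d := by exact_mod_cast Nat.pos_of_ne_zero (by omega)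
  have hL : 1 ≤ L := by
    have : L = 1 + Real.log d := by
      rw [hLdef, Real.log_mul (Real.exp_ne_zero 1) (ne_of_gt hd0), Real.log_exp]
    rw [this]
    have : 0 ≤ Real.log d := Real.log_nonneg (by exact_mod_cast hd)
    linarith
  have hL0 : (0 : ℝ) < L := lt_of_lt_of_le one_pos hL
  have hN0 : (0 : ℝ) < N := by
    have h1 : (0 : ℝ) < ν / Q := div_pos hν hQ
    have h2 : (1 : ℝ) ≤ s₀ := by exact_mod_cast hs₀
    have h3 : (0 : ℝ) < ν / Q * s₀ * L := by positivity
    linarith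
  set c : ℝ := (N : ℝ) / L with hcdef
  have hc : 0 < c := div_pos hN0 hL0
  set τ : ℝ := c ^ ((1 : ℝ) / 4) with hτdef
  have hτ : 0 < τ := Real.rpow_pos_of_pos hc _
  have hτ4 : τ ^ 4 = c := by
    rw [hτdef, ← Real.rpow_natCast (c ^ ((1 : ℝ) / 4)) 4, ← Real.rpow_mul hc.le]
    norm_num
  -- key numeric bound : s₀ * ν ≤ Q * τ^4
  have hkey : (s₀ : ℝ) * ν ≤ Q * τ ^ 4 := by
    rw [hτ4, hcdef]
    have h1 : ν / Q * s₀ * L * Q ≤ (N : ℝ) * Q := mul_le_mul_of_nonneg_right hN hQ.le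
    have h2 : ν / Q * s₀ * L * Q = ν * s₀ * L := by field_simp
    rw [h2] at h1
    rw [mul_comm Q, div_mul_eq_mul_div, le_div_iff₀ hL0]
    nlinarith
  set S : Finset (Fin d) := Finset.univ.filter fun j => v j ≠ 0 with hSdef
  set f : Ω → ℝ := fun ω => ∑ j ∈ S, (x ω j) ^ 4 with hfdef
  have hf_nonneg : ∀ ω, 0 ≤ f ω := fun ω =>
    Finset.sum_nonneg fun j _ => by positivity
  have hf_int : Integrable f μ := integrable_finset_sum S fun j _ => hint4 j
  have hf_integral : ∫ ω, f ω ∂μ ≤ Q * τ ^ 4 := by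
    rw [hfdef]
    calc ∫ ω, ∑ j ∈ S, (x ω j) ^ 4 ∂μ = ∑ j ∈ S, ∫ ω, (x ω j) ^ 4 ∂μ :=
          integral_finset_sum S fun j _ => hint4 j
      _ ≤ ∑ _j ∈ S, ν := Finset.sum_le_sum fun j _ => hmom4 j
      _ = (S.card : ℝ) * ν := by rw [Finset.sum_const, nsmul_eq_mul]
      _ ≤ (s₀ : ℝ) * ν := by
          apply mul_le_mul_of_nonneg_right _ hν.le
          exact_mod_cast hv
      _ ≤ Q * τ ^ 4 := hkey
  -- Markov
  have hmarkov : μ {ω | τ ^ 4 ≤ f ω} ≤ ENNReal.ofReal Q := by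
    have hM := mul_meas_ge_le_integral_of_nonneg (ae_of_all μ hf_nonneg) hf_int (τ ^ 4)
    have hfin : μ {ω | τ ^ 4 ≤ f ω} ≠ ⊤ := measure_ne_top μ _
    rw [ENNReal.le_ofReal_iff_toReal_le hfin hQ.le]
    have hτ4pos : 0 < τ ^ 4 := pow_pos hτ 4
    have hMQ : τ ^ 4 * (μ {ω | τ ^ 4 ≤ f ω}).toReal ≤ Q * τ ^ 4 := le_trans hM hf_integral
    have ht0 : 0 ≤ (μ {ω | τ ^ 4 ≤ f ω}).toReal := ENNReal.toReal_nonneg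
    nlinarith
  -- events
  set A : Set Ω := {ω | 2 * δ * Real.sqrt (∑ j, (v j) ^ 2) ≤ |∑ j, x ω j * v j|} with hAdef
  set B : Set Ω := {ω | ∀ j ∈ S, |x ω j| ≤ τ} with hBdef
  set T : Set Ω := {ω | δ * Real.sqrt (∑ j, (v j) ^ 2) ≤
      |∑ j, (Real.sign (x ω j) * min |x ω j| (((N : ℝ) / L) ^ ((1 : ℝ) / 4))) * v j|} with hTdef
  have hsub : A ∩ B ⊆ T := by
    rintro ω ⟨hA, hB⟩
    have hsum : ∑ j, (Real.sign (x ω j) * min |x ω j| (((N : ℝ) / L) ^ ((1 : ℝ) / 4))) * v j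
        = ∑ j, x ω j * v j := by
      apply Finset.sum_congr rfl
      intro j _
      by_cases hvj : v j = 0
      · simp [hvj]
      · have hjS : j ∈ S := by simp [hSdef, hvj]
        have hle : |x ω j| ≤ τ := hB j hjS
        have : min |x ω j| (((N : ℝ) / L) ^ ((1 : ℝ) / 4)) = |x ω j| := by
          rw [← hcdef, ← hτdef]; exact min_eq_left hle
        rw [this, real_sign_mul_abs]
    have hsq : 0 ≤ Real.sqrt (∑ j, (v j) ^ 2) := Real.sqrt_nonneg _
    simp only [hTdef, Set.mem_setOf_eq, hsum]
    have hA' : 2 * δ * Real.sqrt (∑ j, (v j) ^ 2) ≤ |∑ j, x ω j * v j| := hA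
    nlinarith
  have hBc : Bᶜ ⊆ {ω | τ ^ 4 ≤ f ω} := by
    intro ω hω
    simp only [hBdef, Set.mem_compl_iff, Set.mem_setOf_eq, not_forall] at hω
    obtain ⟨j, hjS, hj⟩ := hω
    push_neg at hj
    have h1 : τ ^ 4 ≤ |x ω j| ^ 4 := pow_le_pow_left₀ hτ.le hj.le 4
    have h2 : |x ω j| ^ 4 = (x ω j) ^ 4 := by
      rw [pow_abs, abs_of_nonneg (by positivity)]
    have h3 : (x ω j) ^ 4 ≤ f ω := by
      show (x ω j) ^ 4 ≤ ∑ i ∈ S, (x ω i) ^ 4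
      exact Finset.single_le_sum (f := fun i => (x ω i) ^ 4) (fun i _ => by positivity) hjS
    simp only [Set.mem_setOf_eq]
    linarith
  -- combine
  have hmono : μ A ≤ μ (A ∩ B) + μ Bᶜ := by
    calc μ A ≤ μ ((A ∩ B) ∪ Bᶜ) := by
          apply measure_mono
          intro ω hω
          by_cases hB : ω ∈ B
          · exact Or.inl ⟨hω, hB⟩
          · exact Or.inr hB
      _ ≤ μ (A ∩ B) + μ Bᶜ := measure_union_le _ _
  have hBcQ : μ Bᶜ ≤ ENNReal.ofReal Q := le_trans (measure_mono hBc) hmarkov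
  have h2Q : ENNReal.ofReal (2 * Q) = ENNReal.ofReal Q + ENNReal.ofReal Q := by
    rw [← ENNReal.ofReal_add hQ.le hQ.le]; ring_nf
  have hAlb : ENNReal.ofReal (2 * Q) ≤ μ A := hsmallball v
  have hfinal : ENNReal.ofReal Q ≤ μ (A ∩ B) := by
    have h1 : ENNReal.ofReal Q + ENNReal.ofReal Q ≤ μ (A ∩ B) + ENNReal.ofReal Q := by
      calc ENNReal.ofReal Q + ENNReal.ofReal Q = ENNReal.ofReal (2 * Q) := h2Q.symm
        _ ≤ μ A := hAlb
        _ ≤ μ (A ∩ B) + μ Bᶜ := hmono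
        _ ≤ μ (A ∩ B) + ENNReal.ofReal Q := add_le_add le_rfl hBcQ
    exact (ENNReal.add_le_add_iff_right ENNReal.ofReal_ne_top).mp h1
  exact le_trans hfinal (measure_mono hsub)

end
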